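/- Let R be a finite ring with Jacobson radical J and socle soc(R) (as a left R-module). Suppose there are given: a left R-module isomorphism ψ : soc(R) → R/J (R/J regarded as a left R-module via the quotient map), and a ring isomorphism ϕ : R/J → ∏_{i=1}^{t} Matrix (Fin m_i) (Fin m_i) F_i, where each F_i is a finite field with q_i elements and each m_i is a positive integer. Define ω : R → ℝ by: for x ∈ soc(R), ω(x) = 1 − ∏_{i=1}^{t} ( (−1)^(r_i) · q_i^(r_i(r_i−1)/2) / ∏_{l=0}^{r_i−1} (q_i^(m_i) − q_i^l) ), where r_i is the rank of the i-th component of ϕ(ψ(x)); and ω(x) = 1 for x ∉ soc(R). Then ω is a normalized homogeneous weight on R. Moreover, ω(x) ≠ 1 for every x ∈ soc(R), so that {x ∈ R : ω(x) = 1} = R ∖ soc(R). -/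

import Mathlib

/-- The principal left ideal generated by `x`, as a set: `{r * x : r ∈ R}`. -/
def leftOrbit {R : Type*} [Ring R] (x : R) : Set R := {z | ∃ r : R, z = r * x}

/-- `ω` is a normalized homogeneous weight on the finite ring `R`. -/
def IsNormHomWeight {R : Type*} [Ring R] [Finite R] (ω : R → ℝ) : Prop :=
  ω 0 = 0 ∧
  (∀ x y : R, leftOrbit x = leftOrbit y → ω x = ω y) ∧
  (∀ x : R, x ≠ 0 →
    ∑ y ∈ (Set.toFinite (leftOrbit x)).toFinset, ω y
      = ((Set.toFinite (leftOrbit x)).toFinset.card : ℝ))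

/-- The socle of `R` as a left module over itself: the supremum of the atoms of the lattice
of left ideals. -/
def ringSocle (R : Type*) [Ring R] : Submodule R R := sSup {m : Submodule R R | IsAtom m}

-- ===== auxiliary lemmas =====

open Module LinearMap

/-- The basic factor function. -/
noncomputable def ffw (qc m r : ℕ) : ℝ :=
  (-1 : ℝ) ^ r * (qc : ℝ) ^ (r * (r - 1) / 2)
    / ∏ l ∈ Finset.range r, ((qc : ℝ) ^ m - (qc : ℝ) ^ l)

lemma ffw_zero (qc m : ℕ) : ffw qc m 0 = 1 := by simp [ffw]

lemma pow_sub_pow_pos {qc : ℕ} (hq : 1 < qc) {m l : ℕ} (h : l < m) :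
    (0:ℝ) < (qc:ℝ)^m - (qc:ℝ)^l := by
  have h1 : (1:ℝ) < (qc:ℝ) := by exact_mod_cast hq
  have : (qc:ℝ) ^ l < (qc:ℝ)^m := pow_lt_pow_right₀ h1 h
  linarith

lemma ffw_denom_ne {qc : ℕ} (hq : 1 < qc) {m r : ℕ} (hr : r ≤ m) :
    (∏ l ∈ Finset.range r, ((qc : ℝ) ^ m - (qc : ℝ) ^ l)) ≠ 0 := by
  apply Finset.prod_ne_zero_iff.mpr
  intro l hl
  exact ne_of_gt (pow_sub_pow_pos hq (lt_of_lt_of_le (Finset.mem_range.mp hl) hr))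

lemma ffw_ne_zero {qc : ℕ} (hq : 1 < qc) {m r : ℕ} (hr : r ≤ m) : ffw qc m r ≠ 0 := by
  have hq0 : (0:ℝ) < (qc:ℝ) := by positivity
  apply div_ne_zero
  · apply mul_ne_zero
    · exact pow_ne_zero _ (by norm_num)
    · exact pow_ne_zero _ (ne_of_gt hq0)
  · exact ffw_denom_ne hq hr

lemma tri_succ (r : ℕ) : (r + 1) * r / 2 = r * (r - 1) / 2 + r := by
  have h1 : (r + 1) * r / 2 = (r + 1).choose 2 := by
    rw [Nat.choose_two_right]; simp
  have h2 : r * (r - 1) / 2 = r.choose 2 := (Nat.choose_two_right r).symm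
  rw [h1, h2, Nat.choose_succ_succ r 1, Nat.choose_one_right, Nat.add_comm]

lemma ffw_rec {qc : ℕ} (hq : 1 < qc) {m r : ℕ} (hr : r < m) :
    (qc:ℝ)^r * ffw qc m r + ((qc:ℝ)^m - (qc:ℝ)^r) * ffw qc m (r+1) = 0 := by
  have hd : ((qc:ℝ)^m - (qc:ℝ)^r) ≠ 0 := ne_of_gt (pow_sub_pow_pos hq hr)
  have hD : (∏ l ∈ Finset.range r, ((qc : ℝ) ^ m - (qc : ℝ) ^ l)) ≠ 0 :=
    ffw_denom_ne hq (le_of_lt hr)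
  rw [ffw, ffw]
  rw [show (r + 1) - 1 = r from rfl, tri_succ r]
  rw [Finset.prod_range_succ, pow_succ, pow_add]
  field_simp
  ring
open Module LinearMap

-- factorization of linear maps through another with bigger kernel
lemma exists_factor {K : Type*} [Field K] {M N P' : Type*}
    [AddCommGroup M] [AddCommGroup N] [AddCommGroup P']
    [Module K M] [Module K N] [Module K P']
    (f : M →ₗ[K] N) (g : M →ₗ[K] P') (h : ker g ≤ ker f) :
    ∃ D : P' →ₗ[K] N, f = D ∘ₗ g := by
  obtain ⟨Wc, hWc⟩ := (range g).exists_isCompl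
  let proj : P' →ₗ[K] (range g) := (range g).linearProjOfIsCompl Wc hWc
  let fbar : (M ⧸ ker g) →ₗ[K] N := (ker g).liftQ f h
  let e : (M ⧸ ker g) ≃ₗ[K] range g := g.quotKerEquivRange
  refine ⟨fbar ∘ₗ (e.symm : range g →ₗ[K] (M ⧸ ker g)) ∘ₗ proj, ?_⟩
  ext x
  have h1 : proj (g x) = ⟨g x, mem_range_self g x⟩ :=
    Submodule.linearProjOfIsCompl_apply_left hWc ⟨g x, mem_range_self g x⟩
  have h2 : e.symm ⟨g x, mem_range_self g x⟩ = Submodule.Quotient.mk x := by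
    rw [LinearEquiv.symm_apply_eq]
    exact Subtype.ext (g.quotKerEquivRange_apply_mk x)
  simp only [coe_comp, Function.comp_apply, LinearEquiv.coe_coe]
  rw [h1, h2]
  simp [fbar]

open Module LinearMap

lemma sum_hom_rank {K : Type*} [Field K] [Fintype K] {m : ℕ}
    (V : Type*) [AddCommGroup V] [Module K V] [Finite V] [Nontrivial V]
    (hVm : finrank K V ≤ m)
    [Fintype (V →ₗ[K] (Fin m → K))] :
    ∑ B : V →ₗ[K] (Fin m → K), ffw (Fintype.card K) m (finrank K (range B)) = 0 := by
  classical
  haveI : Module.Finite K V := Module.Finite.of_finite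
  set q := Fintype.card K with hqdef
  have hq1 : 1 < q := Fintype.one_lt_card
  obtain ⟨v₀, hv₀⟩ := exists_ne (0 : V)
  set K₀ := Submodule.span K {v₀} with hK₀
  obtain ⟨W, hW⟩ := K₀.exists_isCompl
  set T := (Fin m → K) with hT
  haveI : Finite (↥W →ₗ[K] T) := Finite.of_injective _ DFunLike.coe_injective
  haveI : Fintype (↥W →ₗ[K] T) := Fintype.ofFinite _
  have hv₀K₀ : v₀ ∈ K₀ := Submodule.mem_span_singleton_self v₀
  -- the bijection
  set Φ : (V →ₗ[K] T) → T × (↥W →ₗ[K] T) := fun B => (B v₀, B ∘ₗ W.subtype) with hΦ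
  set coeff : ↥K₀ →ₗ[K] K :=
    ((LinearEquiv.toSpanNonzeroSingleton K V v₀ hv₀).symm : ↥K₀ →ₗ[K] K) with hcoeff
  have hcoeffv₀ : coeff ⟨v₀, hv₀K₀⟩ = 1 := by
    rw [hcoeff]
    simp only [LinearEquiv.coe_coe]
    exact LinearEquiv.coord_self K V v₀ hv₀
  set Ψ : T × (↥W →ₗ[K] T) → (V →ₗ[K] T) := fun p =>
    (toSpanSingleton K T p.1) ∘ₗ coeff ∘ₗ (K₀.linearProjOfIsCompl W hW)
      + p.2 ∘ₗ (W.linearProjOfIsCompl K₀ hW.symm) with hΨ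
  have hΦΨ : ∀ p, Φ (Ψ p) = p := by
    intro p
    have h1 : (Ψ p) v₀ = p.1 := by
      simp only [hΨ, LinearMap.add_apply, coe_comp, Function.comp_apply]
      rw [show (K₀.linearProjOfIsCompl W hW) v₀ = ⟨v₀, hv₀K₀⟩ from
        Submodule.linearProjOfIsCompl_apply_left hW ⟨v₀, hv₀K₀⟩]
      rw [hcoeffv₀, show (W.linearProjOfIsCompl K₀ hW.symm) v₀ = 0 from
        Submodule.linearProjOfIsCompl_apply_right' hW.symm hv₀K₀]
      simp
    have h2 : (Ψ p) ∘ₗ W.subtype = p.2 := by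
      ext w
      simp only [hΨ, LinearMap.add_apply, coe_comp, Function.comp_apply, Submodule.coe_subtype]
      rw [show (K₀.linearProjOfIsCompl W hW) w.1 = 0 from
          Submodule.linearProjOfIsCompl_apply_right' hW w.2,
        show (W.linearProjOfIsCompl K₀ hW.symm) w.1 = w from
          Submodule.linearProjOfIsCompl_apply_left hW.symm w]
      simp
    exact Prod.ext h1 h2
  have hsup : K₀ ⊔ W = ⊤ := hW.codisjoint.eq_top
  have hinj : Function.Injective Φ := by
    intro B₁ B₂ h
    apply LinearMap.ext_on (s := insert v₀ (W : Set V))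
    · rw [Submodule.span_insert, Submodule.span_eq, ← hK₀, hsup]
    · intro x hx
      rcases Set.mem_insert_iff.mp hx with rfl | hxW
      · exact congrArg Prod.fst h
      · have := congrArg Prod.snd h
        simp only [hΦ] at this
        exact DFunLike.congr_fun this ⟨x, hxW⟩
  have hbij : Function.Bijective Φ := ⟨hinj, fun p => ⟨Ψ p, hΦΨ p⟩⟩
  have hrange : ∀ B : V →ₗ[K] T,
      range B = Submodule.span K {B v₀} ⊔ range (B ∘ₗ W.subtype) := by
    intro B
    rw [range_eq_map, ← hsup, Submodule.map_sup]
    congr 1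
    · rw [hK₀, Submodule.map_span, Set.image_singleton]
    · rw [range_comp, Submodule.range_subtype]
  -- transport the sum
  have hsummand : ∀ B : V →ₗ[K] T, ffw q m (finrank K ↥(range B))
      = (fun p : T × (↥W →ₗ[K] T) =>
          ffw q m (finrank K ↥((Submodule.span K {p.1}) ⊔ range p.2))) (Φ B) := by
    intro B
    simp only [hΦ]
    rw [hrange B]
  rw [Fintype.sum_bijective Φ hbij _
    (fun p : T × (↥W →ₗ[K] T) =>
      ffw q m (finrank K ↥((Submodule.span K {p.1}) ⊔ range p.2))) hsummand]
  rw [Fintype.sum_prod_type, Finset.sum_comm]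
  -- inner sums vanish
  apply Finset.sum_eq_zero
  intro C _
  set U := range C with hU
  set r := finrank K U with hr
  have hrw : r ≤ finrank K ↥W := finrank_range_le C
  have hWV : finrank K ↥K₀ + finrank K ↥W = finrank K V :=
    Submodule.finrank_add_eq_of_isCompl hW
  have hK₀1 : finrank K ↥K₀ = 1 := finrank_span_singleton hv₀
  have hVpos : 0 < finrank K V := Module.finrank_pos
  have hrm : r < m := by omega
  have hpt : ∀ v : T, ffw q m (finrank K ↥(Submodule.span K {v} ⊔ U))
      = if v ∈ U then ffw q m r else ffw q m (r + 1) := by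
    intro v
    by_cases hv : v ∈ U
    · rw [if_pos hv]
      have : Submodule.span K {v} ⊔ U = U := by
        rw [sup_eq_right]
        exact (Submodule.span_singleton_le_iff_mem v U).mpr hv
      rw [this]
    · rw [if_neg hv]
      have hvne : v ≠ 0 := fun h => hv (h ▸ U.zero_mem)
      have hdisj : Submodule.span K {v} ⊓ U = ⊥ := by
        rw [inf_comm]
        exact (Submodule.disjoint_span_singleton.mpr (fun h => absurd h hv)).eq_bot
      have := Submodule.finrank_sup_add_finrank_inf_eq (Submodule.span K {v}) U
      rw [hdisj, finrank_bot, finrank_span_singleton hvne] at this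
      have : finrank K ↥(Submodule.span K {v} ⊔ U) = r + 1 := by omega
      rw [this]
  calc ∑ v : T, ffw q m (finrank K ↥(Submodule.span K {v} ⊔ U))
      = ∑ v : T, (if v ∈ U then ffw q m r else ffw q m (r + 1)) :=
        Finset.sum_congr rfl (fun v _ => hpt v)
    _ = 0 := by
        rw [Finset.sum_ite, Finset.sum_const, Finset.sum_const]
        have hcardU : (Finset.univ.filter (fun v : T => v ∈ U)).card = q ^ r := by
          rw [← Fintype.card_subtype]
          exact card_eq_pow_finrank
        have hfr : finrank K T = m := by
          show finrank K (Fin m → K) = m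
          rw [finrank_pi]
          exact Fintype.card_fin m
        have htot : Fintype.card T = q ^ m := by
          rw [show Fintype.card T = q ^ finrank K T from card_eq_pow_finrank, hfr]
        have hsplit := Finset.card_filter_add_card_filter_not
          (s := (Finset.univ : Finset T)) (p := fun v : T => v ∈ U)
        rw [Finset.card_univ, htot] at hsplit
        have hle : q ^ r ≤ q ^ m := Nat.pow_le_pow_right (by omega) (le_of_lt hrm)
        have hcardN : (Finset.univ.filter (fun v : T => ¬ v ∈ U)).card = q ^ m - q ^ r := by
          omega
        rw [hcardU, hcardN, nsmul_eq_mul, nsmul_eq_mul]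
        have hcast : ((q ^ m - q ^ r : ℕ) : ℝ) = (q:ℝ) ^ m - (q:ℝ) ^ r := by
          push_cast [Nat.cast_sub hle]; ring
        rw [hcast]
        push_cast
        exact ffw_rec hq1 hrm
open Module LinearMap

lemma mulVecLin_inj {K : Type*} [CommRing K] {m : ℕ} :
    Function.Injective
      (Matrix.mulVecLin : Matrix (Fin m) (Fin m) K → ((Fin m → K) →ₗ[K] (Fin m → K))) := by
  intro A B h
  have h1 : Matrix.toLin' A = Matrix.toLin' B := by
    apply LinearMap.ext
    intro x
    rw [Matrix.toLin'_apply, Matrix.toLin'_apply, ← Matrix.mulVecLin_apply,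
      ← Matrix.mulVecLin_apply, h]
  exact Matrix.toLin'.injective h1

lemma toMatrix'_mulVec {K : Type*} [CommRing K] {m : ℕ}
    (f : (Fin m → K) →ₗ[K] (Fin m → K)) (y : Fin m → K) :
    (LinearMap.toMatrix' f).mulVec y = f y := by
  rw [← Matrix.toLin'_apply, Matrix.toLin'_toMatrix']

lemma matrix_mem_of_ker {K : Type*} [Field K] {m : ℕ}
    (L : Submodule (Matrix (Fin m) (Fin m) K) (Matrix (Fin m) (Fin m) K))
    [Fintype ↥L]
    (B : Matrix (Fin m) (Fin m) K)
    (hB : (⨅ (A : ↥L), ker (Matrix.mulVecLin A.1)) ≤ ker B.mulVecLin) : B ∈ L := by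
  classical
  set C : (Fin m → K) →ₗ[K] (↥L → Fin m → K) :=
    LinearMap.pi (fun A : ↥L => (A.1).mulVecLin) with hC
  have hkerC : ker C = ⨅ (A : ↥L), ker (Matrix.mulVecLin A.1) := ker_pi _
  obtain ⟨D, hD⟩ := exists_factor B.mulVecLin C (by rw [hkerC]; exact hB)
  set MA : ↥L → Matrix (Fin m) (Fin m) K := fun A =>
    LinearMap.toMatrix' (D ∘ₗ LinearMap.single K (fun _ : ↥L => Fin m → K) A) with hMA
  have hvec : ∀ x : Fin m → K, B.mulVec x = ∑ A : ↥L, (MA A * A.1).mulVec x := by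
    intro x
    have h1 : B.mulVec x = D (C x) := by
      have := DFunLike.congr_fun hD x
      simpa using this
    have hx : C x = ∑ A : ↥L, Pi.single A ((A.1).mulVec x) := by
      funext A'
      rw [Finset.sum_apply]
      rw [Fintype.sum_pi_single]
      rfl
    rw [h1, hx, map_sum]
    apply Finset.sum_congr rfl
    intro A _
    rw [← Matrix.mulVec_mulVec, hMA, _root_.toMatrix'_mulVec]
    rfl
  have hBeq : B = ∑ A : ↥L, MA A * A.1 := by
    apply mulVecLin_inj
    apply LinearMap.ext
    intro x
    rw [Matrix.mulVecLin_apply, Matrix.mulVecLin_apply]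
    rw [hvec x]
    symm
    rw [← Matrix.mulVecLin_apply]
    rw [show (∑ A : ↥L, MA A * A.1).mulVecLin
        = ∑ A : ↥L, (MA A * A.1).mulVecLin from map_sum Matrix.toLin' _ Finset.univ]
    rw [LinearMap.sum_apply]
    apply Finset.sum_congr rfl
    intro A _
    rw [Matrix.mulVecLin_apply]
  rw [hBeq]
  exact Submodule.sum_mem L (fun A _ => L.smul_mem _ A.2)

lemma sum_ideal_rank {K : Type*} [Field K] [Fintype K] {m : ℕ}
    (L : Submodule (Matrix (Fin m) (Fin m) K) (Matrix (Fin m) (Fin m) K))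
    [Fintype ↥L] (hL : L ≠ ⊥) :
    ∑ A : ↥L, ffw (Fintype.card K) m (Matrix.rank (A.1 : Matrix (Fin m) (Fin m) K)) = 0 := by
  classical
  set U : Submodule K (Fin m → K) := ⨅ (A : ↥L), ker (Matrix.mulVecLin A.1) with hU
  have hUle : ∀ A : ↥L, U ≤ ker (Matrix.mulVecLin A.1) := fun A => iInf_le _ A
  have hmem : ∀ B : Matrix (Fin m) (Fin m) K, U ≤ ker B.mulVecLin → B ∈ L :=
    fun B hB => matrix_mem_of_ker L B hB
  have hmulinj : Function.Injective (Matrix.mulVecLin :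
      Matrix (Fin m) (Fin m) K → ((Fin m → K) →ₗ[K] (Fin m → K))) := mulVecLin_inj
  obtain ⟨W, hWU⟩ := U.exists_isCompl
  -- W is nontrivial
  have hWbot : W ≠ ⊥ := by
    intro hbot
    apply hL
    have hUtop : U = ⊤ := by
      have := hWU.codisjoint.eq_top
      rwa [hbot, sup_bot_eq] at this
    rw [Submodule.eq_bot_iff]
    intro A hA
    have h0 : (Matrix.mulVecLin A) = 0 := by
      have : ker (Matrix.mulVecLin A) = ⊤ := eq_top_iff.mpr (hUtop ▸ hUle ⟨A, hA⟩)
      exact ker_eq_top.mp this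
    have : Matrix.mulVecLin A = Matrix.mulVecLin (0 : Matrix (Fin m) (Fin m) K) := by
      rw [h0, Matrix.mulVecLin_zero]
    exact hmulinj this
  haveI : Nontrivial ↥W := Submodule.nontrivial_iff_ne_bot.mpr hWbot
  haveI : Finite (↥W →ₗ[K] (Fin m → K)) := Finite.of_injective _ DFunLike.coe_injective
  haveI : Fintype (↥W →ₗ[K] (Fin m → K)) := Fintype.ofFinite _
  set proj : (Fin m → K) →ₗ[K] ↥W := W.linearProjOfIsCompl U hWU.symm with hproj
  set Φ : ↥L → (↥W →ₗ[K] (Fin m → K)) := fun A => (A.1).mulVecLin ∘ₗ W.subtype with hΦ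
  have hsupWU : W ⊔ U = ⊤ := hWU.symm.codisjoint.eq_top
  -- injectivity
  have hinj : Function.Injective Φ := by
    intro A₁ A₂ h
    apply Subtype.ext
    apply hmulinj
    apply LinearMap.ext_on (s := (W : Set (Fin m → K)) ∪ (U : Set (Fin m → K)))
    · rw [Submodule.span_union, Submodule.span_eq, Submodule.span_eq, hsupWU]
    · intro x hx
      rcases hx with hxW | hxU
      · exact DFunLike.congr_fun h ⟨x, hxW⟩
      · have h1 : (A₁.1).mulVecLin x = 0 := hUle A₁ hxU
        have h2 : (A₂.1).mulVecLin x = 0 := hUle A₂ hxU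
        rw [h1, h2]
  -- surjectivity
  have hsurj : Function.Surjective Φ := by
    intro Cmap
    set B : Matrix (Fin m) (Fin m) K := LinearMap.toMatrix' (Cmap ∘ₗ (proj : (Fin m → K) →ₗ[K] ↥W)) with hB
    have hBlin : B.mulVecLin = Cmap ∘ₗ (proj : (Fin m → K) →ₗ[K] ↥W) := by
      apply LinearMap.ext
      intro x
      rw [Matrix.mulVecLin_apply, hB, _root_.toMatrix'_mulVec]
    have hBmem : B ∈ L := by
      apply hmem
      intro x hxU
      rw [mem_ker, hBlin]
      show Cmap (proj x) = 0
      rw [show proj x = 0 from Submodule.linearProjOfIsCompl_apply_right' hWU.symm hxU, map_zero]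
    refine ⟨⟨B, hBmem⟩, ?_⟩
    apply LinearMap.ext
    intro w
    show B.mulVecLin w.1 = Cmap w
    rw [hBlin]
    show Cmap (proj w.1) = Cmap w
    rw [show proj w.1 = w from Submodule.linearProjOfIsCompl_apply_left hWU.symm w]
  -- rank compatibility
  have hrank : ∀ A : ↥L, Matrix.rank (A.1) = finrank K ↥(range (Φ A)) := by
    intro A
    have hreq : range ((A.1).mulVecLin) = range (Φ A) := by
      have h0 : range ((A.1).mulVecLin) = Submodule.map ((A.1).mulVecLin) ⊤ :=
        (Submodule.map_top _).symm
      rw [h0, ← hsupWU, Submodule.map_sup]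
      have hmapU : Submodule.map ((A.1).mulVecLin) U = ⊥ := by
        rw [Submodule.eq_bot_iff]
        intro y hy
        obtain ⟨x, hxU, rfl⟩ := Submodule.mem_map.mp hy
        exact hUle A hxU
      have hmapW : Submodule.map ((A.1).mulVecLin) W = range (Φ A) := by
        rw [hΦ, range_comp, Submodule.range_subtype]
      rw [hmapU, hmapW, sup_bot_eq]
    rw [Matrix.rank, hreq]
  -- transport and conclude
  have hsummand : ∀ A : ↥L, ffw (Fintype.card K) m (Matrix.rank (A.1))
      = (fun C : ↥W →ₗ[K] (Fin m → K) => ffw (Fintype.card K) m (finrank K ↥(range C))) (Φ A) :=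
    fun A => by rw [hrank A]
  rw [Fintype.sum_bijective Φ ⟨hinj, hsurj⟩ _
    (fun C : ↥W →ₗ[K] (Fin m → K) => ffw (Fintype.card K) m (finrank K ↥(range C))) hsummand]
  apply sum_hom_rank
  have h1 : finrank K ↥W ≤ finrank K (Fin m → K) := Submodule.finrank_le W
  rwa [finrank_pi, Fintype.card_fin] at h1
open Module LinearMap

lemma sum_pi_ideal {t : ℕ} {mdim : Fin t → ℕ}
    {F : Fin t → Type*} [∀ i, Field (F i)] [∀ i, Fintype (F i)]
    (T : Submodule (∀ i, Matrix (Fin (mdim i)) (Fin (mdim i)) (F i))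
        (∀ i, Matrix (Fin (mdim i)) (Fin (mdim i)) (F i)))
    [Fintype ↥T] (hT : T ≠ ⊥) :
    ∑ w : ↥T, ∏ i, ffw (Fintype.card (F i)) (mdim i) ((w.1 i).rank) = 0 := by
  classical
  set L : ∀ i, Submodule (Matrix (Fin (mdim i)) (Fin (mdim i)) (F i))
      (Matrix (Fin (mdim i)) (Fin (mdim i)) (F i)) := fun i =>
    { carrier := {A | ∃ w, w ∈ T ∧ w i = A}
      add_mem' := by
        rintro a b ⟨w, hw, rfl⟩ ⟨w', hw', rfl⟩
        exact ⟨w + w', T.add_mem hw hw', rfl⟩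
      zero_mem' := ⟨0, T.zero_mem, rfl⟩
      smul_mem' := by
        rintro c a ⟨w, hw, rfl⟩
        refine ⟨(Pi.single i c : ∀ j, Matrix (Fin (mdim j)) (Fin (mdim j)) (F j)) * w,
          T.smul_mem _ hw, ?_⟩
        show (Pi.single i c : ∀ j, Matrix (Fin (mdim j)) (Fin (mdim j)) (F j)) i * w i = c • w i
        rw [Pi.single_eq_same, smul_eq_mul] } with hL
  have hchar : ∀ w, w ∈ T ↔ ∀ i, w i ∈ L i := by
    intro w
    constructor
    · exact fun hw i => ⟨w, hw, rfl⟩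
    · intro h
      choose g hg1 hg2 using h
      have hw : w = ∑ i, (Pi.single i (1 : Matrix (Fin (mdim i)) (Fin (mdim i)) (F i)) :
          ∀ j, Matrix (Fin (mdim j)) (Fin (mdim j)) (F j)) * g i := by
        funext j
        rw [Finset.sum_apply]
        have key : ∀ i, ((Pi.single i (1 : Matrix (Fin (mdim i)) (Fin (mdim i)) (F i)) :
            ∀ j, Matrix (Fin (mdim j)) (Fin (mdim j)) (F j)) * g i) j
            = (Pi.single i (g i i) : ∀ j, Matrix (Fin (mdim j)) (Fin (mdim j)) (F j)) j := by
          intro i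
          show (Pi.single i (1 : Matrix (Fin (mdim i)) (Fin (mdim i)) (F i)) :
            ∀ j, Matrix (Fin (mdim j)) (Fin (mdim j)) (F j)) j * g i j
            = (Pi.single i (g i i) : ∀ j, Matrix (Fin (mdim j)) (Fin (mdim j)) (F j)) j
          by_cases hij : j = i
          · subst hij
            rw [Pi.single_eq_same, Pi.single_eq_same, one_mul]
          · rw [Pi.single_eq_of_ne hij, Pi.single_eq_of_ne hij, zero_mul]
        rw [Finset.sum_congr rfl (fun i _ => key i), Fintype.sum_pi_single]
        rw [hg2 j]
      rw [hw]
      exact Submodule.sum_mem T (fun i _ => T.smul_mem _ (hg1 i))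
  obtain ⟨w₀, hw₀T, hw₀⟩ := (Submodule.ne_bot_iff T).mp hT
  obtain ⟨i₀, hi₀⟩ := Function.ne_iff.mp hw₀
  have hLne : L i₀ ≠ ⊥ :=
    (Submodule.ne_bot_iff _).mpr ⟨w₀ i₀, ⟨w₀, hw₀T, rfl⟩, by simpa using hi₀⟩
  haveI instLF : ∀ i, Fintype ↥(L i) := fun i => Fintype.ofFinite _
  set e : ↥T ≃ (∀ i, ↥(L i)) :=
    { toFun := fun w => fun i => ⟨w.1 i, (hchar w.1).mp w.2 i⟩
      invFun := fun g => ⟨fun i => (g i).1, (hchar _).mpr (fun i => (g i).2)⟩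
      left_inv := fun w => Subtype.ext rfl
      right_inv := fun g => funext (fun i => Subtype.ext rfl) } with he
  rw [Fintype.sum_equiv e
    (fun w : ↥T => ∏ i, ffw (Fintype.card (F i)) (mdim i) ((w.1 i).rank))
    (fun g : ∀ i, ↥(L i) => ∏ i, ffw (Fintype.card (F i)) (mdim i) (((g i).1).rank))
    (fun w => rfl)]
  have hps := Finset.prod_univ_sum (fun i => (Finset.univ : Finset ↥(L i)))
    (fun i A => ffw (Fintype.card (F i)) (mdim i) ((A.1).rank))
  rw [Fintype.piFinset_univ] at hps
  rw [← hps]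
  exact Finset.prod_eq_zero (Finset.mem_univ i₀) (sum_ideal_rank (L i₀) hLne)

open Classical in
theorem homogeneous_weight_general_frobenius
    {R : Type*} [Ring R] [Finite R]
    (t : ℕ) (mdim : Fin t → ℕ) (hm : ∀ i, 0 < mdim i)
    (F : Fin t → Type*) [∀ i, Field (F i)] [∀ i, Fintype (F i)]
    (q : Fin t → ℕ) (hq : ∀ i, Fintype.card (F i) = q i)
    {S : Type*} [Ring S]
    (π : R →+* S) (hπ : Function.Surjective π)
    (hker : RingHom.ker π = (⊥ : Ideal R).jacobson)
    (ψ : ringSocle R ≃+ S)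
    (hψ : ∀ (r : R) (x : ringSocle R), ψ (r • x) = π r * ψ x)
    (ϕ : S ≃+* ∀ i, Matrix (Fin (mdim i)) (Fin (mdim i)) (F i))
    (ω : R → ℝ)
    (hω : ∀ x : R, ω x = if h : x ∈ ringSocle R then
        1 - ∏ i : Fin t,
          ((-1 : ℝ) ^ (ϕ (ψ ⟨x, h⟩) i).rank
            * (q i : ℝ) ^ ((ϕ (ψ ⟨x, h⟩) i).rank * ((ϕ (ψ ⟨x, h⟩) i).rank - 1) / 2)
            / ∏ l ∈ Finset.range (ϕ (ψ ⟨x, h⟩) i).rank, ((q i : ℝ) ^ (mdim i) - (q i : ℝ) ^ l))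
      else 1) :
    IsNormHomWeight ω ∧ (∀ x ∈ ringSocle R, ω x ≠ 1) ∧
      {x : R | ω x = 1} = ((ringSocle R : Set R))ᶜ := by
  classical
  set Γ : (∀ i, Matrix (Fin (mdim i)) (Fin (mdim i)) (F i)) → ℝ :=
    fun w => ∏ i, ffw (q i) (mdim i) ((w i).rank) with hΓ
  have hω' : ∀ (x : R) (h : x ∈ ringSocle R), ω x = 1 - Γ (ϕ (ψ ⟨x, h⟩)) := by
    intro x h
    rw [hω x, dif_pos h]
    rfl
  have hωout : ∀ x : R, x ∉ ringSocle R → ω x = 1 := fun x h => by rw [hω x, dif_neg h]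
  have hq1 : ∀ i, 1 < q i := fun i => hq i ▸ Fintype.one_lt_card
  have hrankle : ∀ (w : ∀ i, Matrix (Fin (mdim i)) (Fin (mdim i)) (F i)) (i : Fin t),
      ((w i).rank) ≤ mdim i := by
    intro w i
    have := Matrix.rank_le_card_width (w i)
    rwa [Fintype.card_fin] at this
  have hΓne : ∀ w, Γ w ≠ 0 := fun w =>
    Finset.prod_ne_zero_iff.mpr (fun i _ => ffw_ne_zero (hq1 i) (hrankle w i))
  -- Part 2
  have hne1 : ∀ x ∈ ringSocle R, ω x ≠ 1 := by
    intro x hx hcon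
    rw [hω' x hx] at hcon
    exact hΓne _ (sub_eq_self.mp hcon)
  -- socle and atoms
  haveI : Finite (Submodule R R) :=
    Finite.of_injective (fun p : Submodule R R => (p : Set R)) SetLike.coe_injective
  haveI : IsAtomic (Submodule R R) :=
    isAtomic_of_orderBot_wellFounded_lt (Finite.to_wellFoundedLT.wf)
  have hatomle : ∀ a : Submodule R R, IsAtom a → a ≤ ringSocle R := fun a ha => le_sSup ha
  refine ⟨⟨?_, ?_, ?_⟩, hne1, ?_⟩
  · -- ω 0 = 0
    have h0 : (0 : R) ∈ ringSocle R := Submodule.zero_mem _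
    rw [hω' 0 h0]
    have hz : (⟨0, h0⟩ : ringSocle R) = 0 := rfl
    rw [hz, map_zero, map_zero]
    have hΓ1 : Γ 0 = 1 := by
      apply Finset.prod_eq_one
      intro i _
      rw [Pi.zero_apply, Matrix.rank_zero, ffw_zero]
    rw [hΓ1, sub_self]
  · -- invariance
    intro x y hxy
    have hyx : ∃ r : R, y = r * x := by
      have h1 : y ∈ leftOrbit y := ⟨1, (one_mul y).symm⟩
      rw [← hxy] at h1
      exact h1
    have hxy' : ∃ r : R, x = r * y := by
      have h1 : x ∈ leftOrbit x := ⟨1, (one_mul x).symm⟩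
      rw [hxy] at h1
      exact h1
    by_cases hx : x ∈ ringSocle R
    · obtain ⟨r, hr⟩ := hyx
      obtain ⟨r', hr'⟩ := hxy'
      have hy : y ∈ ringSocle R := by
        rw [hr, ← smul_eq_mul]
        exact Submodule.smul_mem _ r hx
      have hy_eq : (⟨y, hy⟩ : ringSocle R) = r • (⟨x, hx⟩ : ringSocle R) :=
        Subtype.ext (show y = r • x from by rw [smul_eq_mul]; exact hr)
      have hx_eq : (⟨x, hx⟩ : ringSocle R) = r' • (⟨y, hy⟩ : ringSocle R) :=
        Subtype.ext (show x = r' • y from by rw [smul_eq_mul]; exact hr')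
      have h1 : ϕ (ψ ⟨y, hy⟩) = ϕ (π r) * ϕ (ψ ⟨x, hx⟩) := by
        rw [hy_eq, hψ, map_mul]
      have h2 : ϕ (ψ ⟨x, hx⟩) = ϕ (π r') * ϕ (ψ ⟨y, hy⟩) := by
        rw [hx_eq, hψ, map_mul]
      have hrk : ∀ i, ((ϕ (ψ ⟨y, hy⟩)) i).rank = ((ϕ (ψ ⟨x, hx⟩)) i).rank := by
        intro i
        apply le_antisymm
        · rw [h1, Pi.mul_apply]
          exact Matrix.rank_mul_le_right _ _
        · conv_lhs => rw [h2]
          rw [Pi.mul_apply]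
          exact Matrix.rank_mul_le_right _ _
      rw [hω' x hx, hω' y hy]
      have : Γ (ϕ (ψ ⟨y, hy⟩)) = Γ (ϕ (ψ ⟨x, hx⟩)) :=
        Finset.prod_congr rfl (fun i _ => by rw [hrk i])
      rw [this]
    · have hy : y ∉ ringSocle R := by
        intro hy
        apply hx
        obtain ⟨r', hr'⟩ := hxy'
        rw [hr', ← smul_eq_mul]
        exact Submodule.smul_mem _ r' hy
      rw [hωout x hx, hωout y hy]
  · -- the averaging condition
    intro x hx0
    set N := Submodule.span R {x} with hN
    have horb : leftOrbit x = (N : Set R) := by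
      ext z
      constructor
      · rintro ⟨r, rfl⟩
        rw [SetLike.mem_coe, ← smul_eq_mul]
        exact N.smul_mem r (Submodule.mem_span_singleton_self x)
      · intro hz
        obtain ⟨a, ha⟩ := Submodule.mem_span_singleton.mp hz
        exact ⟨a, by rw [← ha]; rfl⟩
    set s := (Set.toFinite (leftOrbit x)).toFinset with hs
    set c : R → ℝ := fun y => if h : y ∈ ringSocle R then Γ (ϕ (ψ ⟨y, h⟩)) else 0 with hcdef
    have hωc : ∀ y, ω y = 1 - c y := by
      intro y
      by_cases h : y ∈ ringSocle R
      · rw [hω' y h, hcdef]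
        simp only [dif_pos h]
      · rw [hωout y h, hcdef]
        simp only [dif_neg h]
        rw [sub_zero]
    -- the submodule T of the product ring
    set T : Submodule (∀ i, Matrix (Fin (mdim i)) (Fin (mdim i)) (F i))
        (∀ i, Matrix (Fin (mdim i)) (Fin (mdim i)) (F i)) :=
      { carrier := {w | ∃ y : ringSocle R, (y : R) ∈ N ∧ ϕ (ψ y) = w}
        add_mem' := by
          rintro a b ⟨ya, hya, rfl⟩ ⟨yb, hyb, rfl⟩
          refine ⟨ya + yb, ?_, by rw [map_add, map_add]⟩
          rw [Submodule.coe_add]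
          exact N.add_mem hya hyb
        zero_mem' := ⟨0, by rw [ZeroMemClass.coe_zero]; exact N.zero_mem, by
          rw [map_zero, map_zero]⟩
        smul_mem' := by
          rintro cc w ⟨y, hy, rfl⟩
          obtain ⟨r, hr⟩ := hπ (ϕ.symm cc)
          refine ⟨r • y, ?_, ?_⟩
          · rw [Submodule.coe_smul, smul_eq_mul]
            rw [← smul_eq_mul]
            exact N.smul_mem r hy
          · rw [hψ, map_mul, hr, RingEquiv.apply_symm_apply]
            rfl } with hT
    haveI : Fintype ↥T := Fintype.ofFinite _
    have hTne : T ≠ ⊥ := by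
      have hNne : N ≠ ⊥ :=
        (Submodule.ne_bot_iff N).mpr ⟨x, Submodule.mem_span_singleton_self x, hx0⟩
      rcases IsAtomic.eq_bot_or_exists_atom_le N with hbot | ⟨a, ha, hle⟩
      · exact absurd hbot hNne
      obtain ⟨y₀, hy₀a, hy₀ne⟩ := (Submodule.ne_bot_iff a).mp ha.1
      have hy₀soc : y₀ ∈ ringSocle R := hatomle a ha hy₀a
      have hy₀N : y₀ ∈ N := hle hy₀a
      apply (Submodule.ne_bot_iff T).mpr
      refine ⟨ϕ (ψ ⟨y₀, hy₀soc⟩), ⟨⟨y₀, hy₀soc⟩, hy₀N, rfl⟩, ?_⟩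
      intro hzero
      have h1 : ψ (⟨y₀, hy₀soc⟩ : ringSocle R) = 0 := by
        have := EmbeddingLike.map_eq_zero_iff.mp hzero
        exact this
      have h2 : (⟨y₀, hy₀soc⟩ : ringSocle R) = 0 := EmbeddingLike.map_eq_zero_iff.mp h1
      exact hy₀ne (by simpa using congrArg Subtype.val h2)
    have key := sum_pi_ideal T hTne
    have key' : ∑ w : ↥T, Γ w.1 = 0 := by
      have hpt : ∀ w : ↥T, Γ w.1
          = ∏ i, ffw (Fintype.card (F i)) (mdim i) ((w.1 i).rank) :=
        fun w => Finset.prod_congr rfl (fun i _ => by rw [hq i])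
      rw [Finset.sum_congr rfl (fun w _ => hpt w), key]
    have hsum0 : ∑ y ∈ s, c y = 0 := by
      have h1 : ∑ y ∈ s, c y = ∑ y ∈ s.filter (fun y => y ∈ ringSocle R), c y := by
        rw [Finset.sum_filter]
        apply Finset.sum_congr rfl
        intro y _
        by_cases h : y ∈ ringSocle R
        · rw [if_pos h]
        · rw [if_neg h, hcdef]
          simp only [dif_neg h]
      rw [h1, ← key']
      apply Finset.sum_bij (i := fun y hy =>
        (⟨ϕ (ψ ⟨y, (Finset.mem_filter.mp hy).2⟩),
          ⟨⟨y, (Finset.mem_filter.mp hy).2⟩, by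
            have hyN : y ∈ leftOrbit x := (Set.Finite.mem_toFinset _).mp
              (Finset.mem_filter.mp hy).1
            rw [horb] at hyN
            exact hyN, rfl⟩⟩ : ↥T))
      · intro a ha
        exact Finset.mem_univ _
      · intro a₁ ha₁ a₂ ha₂ heq
        have h2 := congrArg Subtype.val heq
        simp only at h2
        have h3 := ϕ.injective h2
        have h4 := ψ.injective h3
        exact congrArg Subtype.val h4
      · intro b _
        obtain ⟨y, hyN, hyb⟩ := b.2
        have hys : (y : R) ∈ s := by
          rw [hs, Set.Finite.mem_toFinset, horb]
          exact hyN
        refine ⟨(y : R), Finset.mem_filter.mpr ⟨hys, y.2⟩, ?_⟩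
        apply Subtype.ext
        simp only
        rw [show (⟨(y : R), y.2⟩ : ringSocle R) = y from Subtype.ext rfl]
        exact hyb
      · intro a ha
        rw [hcdef]
        simp only [dif_pos (Finset.mem_filter.mp ha).2]
    have hfin : ∑ y ∈ s, ω y = ∑ y ∈ s, (1 - c y) :=
      Finset.sum_congr rfl (fun y _ => hωc y)
    rw [hfin, Finset.sum_sub_distrib, hsum0, sub_zero, Finset.sum_const, nsmul_eq_mul, mul_one]
  · -- set equality
    ext x
    simp only [Set.mem_setOf_eq, Set.mem_compl_iff, SetLike.mem_coe]
    constructor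
    · intro h hx
      exact hne1 x hx h
    · intro h
      exact hωout x h
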